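/- Let X be a set, R an equivalence relation on X, and δ₁, δ₂ discrete probability distributions on X. Then there exists a weighting function w : X × X → [0,1] witnessing δ₁ L(R) δ₂ (i.e., w(x,y) > 0 implies x R y, ∑_y w(x,y) = δ₁(x), and ∑_x w(x,y) = δ₂(y)) if and only if for every equivalence class C of R, δ₁(C) = δ₂(C). -/

import Mathlib

/-- for an equivalence relation on a finite set, a weighting function
witnessing the lifting exists iff the two distributions agree on every equivalence class. -/
theorem lifting_iff_class_probabilities {X : Type*} [Fintype X]
    (R : X → X → Prop) [DecidableRel R] (hR : Equivalence R)
    (δ₁ δ₂ : X → ℝ)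
    (h1 : ∀ x, 0 ≤ δ₁ x) (h1s : ∑ x, δ₁ x = 1)
    (h2 : ∀ x, 0 ≤ δ₂ x) (h2s : ∑ x, δ₂ x = 1) :
    (∃ w : X → X → ℝ,
        (∀ x y, 0 ≤ w x y ∧ w x y ≤ 1) ∧
        (∀ x y, 0 < w x y → R x y) ∧
        (∀ x, ∑ y, w x y = δ₁ x) ∧
        (∀ y, ∑ x, w x y = δ₂ y)) ↔
      (∀ x : X, ∑ y ∈ Finset.univ.filter (fun y => R x y), δ₁ y
        = ∑ y ∈ Finset.univ.filter (fun y => R x y), δ₂ y) := by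
  classical
  set C : X → Finset X := fun x => Finset.univ.filter (fun y => R x y) with hC
  have memC : ∀ x y, y ∈ C x ↔ R x y := by
    intro x y; simp [hC]
  have Ceq : ∀ {x y}, R x y → C x = C y := by
    intro x y hxy
    ext z
    simp only [memC]
    exact ⟨fun h => hR.trans (hR.symm hxy) h, fun h => hR.trans hxy h⟩
  constructor
  · rintro ⟨w, hw01, hwR, hw1, hw2⟩ x
    have hwz : ∀ y z, ¬ R y z → w y z = 0 := by
      intro y z h
      rcases lt_or_eq_of_le (hw01 y z).1 with hlt | heq
      · exact absurd (hwR y z hlt) h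
      · exact heq.symm
    have left : ∑ y ∈ C x, δ₁ y = ∑ y ∈ C x, ∑ z ∈ C x, w y z := by
      apply Finset.sum_congr rfl
      intro y hy
      rw [← hw1 y]
      symm
      apply Finset.sum_subset (Finset.subset_univ _)
      intro z _ hz
      apply hwz
      intro hyz
      exact hz ((memC x z).2 (hR.trans ((memC x y).1 hy) hyz))
    have right : ∑ z ∈ C x, δ₂ z = ∑ z ∈ C x, ∑ y ∈ C x, w y z := by
      apply Finset.sum_congr rfl
      intro z hz
      rw [← hw2 z]
      symm
      apply Finset.sum_subset (Finset.subset_univ _)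
      intro y _ hy
      apply hwz
      intro hyz
      exact hy ((memC x y).2 (hR.trans ((memC x z).1 hz) (hR.symm hyz)))
    rw [left, right, Finset.sum_comm]
  · intro h
    set S : X → ℝ := fun x => ∑ y ∈ C x, δ₁ y with hS
    have hSnn : ∀ x, 0 ≤ S x := fun x => Finset.sum_nonneg (fun y _ => h1 y)
    have hδ₁S : ∀ x, δ₁ x ≤ S x := by
      intro x
      exact Finset.single_le_sum (fun y _ => h1 y) ((memC x x).2 (hR.refl x))
    have hδ₂S : ∀ x, δ₂ x ≤ S x := by
      intro x
      have : S x = ∑ y ∈ C x, δ₂ y := h x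
      rw [this]
      exact Finset.single_le_sum (fun y _ => h2 y) ((memC x x).2 (hR.refl x))
    have hSeq : ∀ {x y}, R x y → S x = S y := by
      intro x y hxy; simp only [hS]; rw [Ceq hxy]
    refine ⟨fun x y => if R x y ∧ 0 < S x then δ₁ x * δ₂ y / S x else 0, ?_, ?_, ?_, ?_⟩
    · intro x y
      by_cases hc : R x y ∧ 0 < S x
      · dsimp only
        rw [if_pos hc]
        constructor
        · exact div_nonneg (mul_nonneg (h1 x) (h2 y)) (hSnn x)
        · rw [div_le_one hc.2]
          calc δ₁ x * δ₂ y ≤ S x * 1 :=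
                mul_le_mul (hδ₁S x) (by
                  calc δ₂ y ≤ ∑ z, δ₂ z :=
                        Finset.single_le_sum (fun z _ => h2 z) (Finset.mem_univ y)
                  _ = 1 := h2s) (h2 y) (hSnn x)
          _ = S x := mul_one _
      · simp [hc]
    · intro x y hpos
      by_cases hc : R x y ∧ 0 < S x
      · exact hc.1
      · simp [hc] at hpos
    · intro x
      by_cases hSx : 0 < S x
      · have key : ∑ y, (if R x y ∧ 0 < S x then δ₁ x * δ₂ y / S x else 0)
            = ∑ y ∈ C x, δ₁ x * δ₂ y / S x := by
          rw [← Finset.sum_filter]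
          apply Finset.sum_congr
          · ext y; simp [memC, hSx, hC]
          · intros; rfl
        rw [key]
        have : ∑ y ∈ C x, δ₁ x * δ₂ y / S x = δ₁ x * (∑ y ∈ C x, δ₂ y) / S x := by
          rw [Finset.mul_sum, Finset.sum_div]
        rw [this, ← h x]
        field_simp
        rfl
      · have hz : S x = 0 := le_antisymm (not_lt.1 hSx) (hSnn x)
        have hd : δ₁ x = 0 := le_antisymm (hz ▸ hδ₁S x) (h1 x)
        simp only [hSx, and_false, if_false, Finset.sum_const_zero]
        exact hd.symm
    · intro y
      by_cases hSy : 0 < S y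
      · have key : ∑ x, (if R x y ∧ 0 < S x then δ₁ x * δ₂ y / S x else 0)
            = ∑ x ∈ C y, δ₁ x * δ₂ y / S y := by
          rw [← Finset.sum_filter]
          apply Finset.sum_congr
          · ext x
            simp only [Finset.mem_filter, Finset.mem_univ, true_and, memC]
            constructor
            · rintro ⟨hxy, _⟩; exact hR.symm hxy
            · intro hyx
              have hxy := hR.symm hyx
              exact ⟨hxy, (hSeq hxy).symm ▸ hSy⟩
          · intro x hx
            have hyx := (memC y x).1 hx
            rw [hSeq (hR.symm hyx)]
        rw [key]
        have : ∑ x ∈ C y, δ₁ x * δ₂ y / S y = (∑ x ∈ C y, δ₁ x) * δ₂ y / S y := by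
          rw [Finset.sum_mul, Finset.sum_div]
        rw [this]
        have hSy' : (∑ x ∈ C y, δ₁ x) = S y := rfl
        rw [hSy']
        field_simp
      · have hz : S y = 0 := le_antisymm (not_lt.1 hSy) (hSnn y)
        have hd : δ₂ y = 0 := le_antisymm (hz ▸ hδ₂S y) (h2 y)
        have hall : ∀ x, (if R x y ∧ 0 < S x then δ₁ x * δ₂ y / S x else 0) = 0 := by
          intro x
          by_cases hc : R x y ∧ 0 < S x
          · exact absurd ((hSeq hc.1) ▸ hc.2) hSy
          · simp [hc]
        simp only [hall, Finset.sum_const_zero]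
        exact hd.symm
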